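/- Let S : C → C be nonspreading on a nonempty closed convex subset C of a real Hilbert space and δ ∈ (0,1). Then for the averaged type mapping A_S = (1−δ)I + δS and all x,y ∈ C: ‖A_Sx−A_Sy‖² ≤ ‖x−y‖² + (2/δ)⟨x−A_Sx, y−A_Sy⟩ − (1−δ)‖(x−A_Sx)−(y−A_Sy)‖². -/

import Mathlib

theorem stmt_9 {H : Type*} [NormedAddCommGroup H] [InnerProductSpace ℝ H]
    (C : Set H) (hC : C.Nonempty) (hCc : IsClosed C) (hCv : Convex ℝ C)
    (S : H → H) (hS : Set.MapsTo S C C)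
    (hns : ∀ x ∈ C, ∀ y ∈ C,
      ‖S x - S y‖ ^ 2 ≤ ‖x - y‖ ^ 2 + 2 * inner ℝ (x - S x) (y - S y))
    (δ : ℝ) (hδ : δ ∈ Set.Ioo (0 : ℝ) 1)
    (A : H → H) (hA : ∀ x, A x = (1 - δ) • x + δ • S x) :
    ∀ x ∈ C, ∀ y ∈ C,
      ‖A x - A y‖ ^ 2 ≤ ‖x - y‖ ^ 2 + (2 / δ) * inner ℝ (x - A x) (y - A y)
        - (1 - δ) * ‖(x - A x) - (y - A y)‖ ^ 2 := by
  intro x hx y hy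
  have hd0 : 0 < δ := hδ.1
  have hd1 : δ < 1 := hδ.2
  have key := hns x hx y hy
  set u := x - S x with hu
  set v := y - S y with hv
  have hAx : x - A x = δ • u := by rw [hA, hu]; module
  have hAy : y - A y = δ • v := by rw [hA, hv]; module
  have hAxy : A x - A y = (x - y) - δ • (u - v) := by rw [hA, hA, hu, hv]; module
  have hSxy : S x - S y = (x - y) - (u - v) := by rw [hu, hv]; module
  rw [hSxy, norm_sub_sq_real] at key
  rw [hAxy, hAx, hAy, norm_sub_sq_real, real_inner_smul_left, real_inner_smul_right,
    real_inner_smul_right, ← smul_sub, norm_smul]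
  have habs : |δ| = δ := abs_of_pos hd0
  rw [Real.norm_eq_abs, habs, mul_pow]
  have hdiv : (2 / δ) * (δ * (δ * inner ℝ u v)) = 2 * δ * (inner ℝ u v : ℝ) := by
    field_simp
  rw [hdiv]
  have hc : (0:ℝ) ≤ ‖u - v‖ ^ 2 := sq_nonneg _
  nlinarith [sq_nonneg (1 - δ), mul_nonneg (mul_nonneg hd0.le (sub_nonneg.2 hd1.le)) hc,
    mul_le_mul_of_nonneg_left key hd0.le]
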